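/- (Browder's demiclosedness principle) Let H be a real Hilbert space and D ⊆ H. If T : H → H is nonexpansive on D (i.e., 1-Lipschitz on D), then the operator Id − T is demiclosed on D: for every u ∈ H, whenever D is nonempty and weakly sequentially closed, and (x_n) is a sequence in D converging weakly to some l ∈ D with (x_n − T x_n) converging strongly to u, we have l − T l = u. -/

import Mathlib

open Filter Topology TopologicalSpace Function

variable {H : Type*} [NormedAddCommGroup H] [InnerProductSpace ℝ H]

def WeakConverge (x : ℕ → H) (p : H) : Prop :=
  Tendsto ((toWeakSpace ℝ H) ∘ x) atTop (nhds ((toWeakSpace ℝ H) p))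

def FixSet (T : H → H) : Set H := {x | Function.IsFixedPt T x}

def QuasiNonexpansiveOn (T : H → H) (s : Set H) : Prop :=
  ∀ ⦃x⦄, x ∈ s → ∀ ⦃y⦄, y ∈ FixSet T ∩ s → ‖T x - y‖ ≤ ‖x - y‖

def NonexpansiveOn (T : H → H) (s : Set H) : Prop := LipschitzOnWith 1 T s

def IsWeaklySeqClosed (s : Set H) : Prop := IsSeqClosed ((toWeakSpace ℝ H) '' s)

def DemiclosedAt (D : Set H) (T : H → H) (u : H) : Prop :=
  D.Nonempty → IsWeaklySeqClosed D →
    ∀ x : ℕ → H, (∀ n, x n ∈ D) → ∀ l : H, l ∈ D → WeakConverge x l →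
      Tendsto (fun n => T (x n)) atTop (nhds u) → T l = u

def DemiclosedOn (T : H → H) (D : Set H) : Prop := ∀ u : H, DemiclosedAt D T u

lemma weakConverge_inner {x : ℕ → H} {l : H} (h : WeakConverge x l) (y : H) :
    Tendsto (fun n => (inner ℝ y (x n) : ℝ)) atTop (nhds (inner ℝ y l : ℝ)) := by
  have := ((WeakBilin.eval_continuous ((topDualPairing ℝ H).flip)
      (innerSL ℝ y)).continuousAt (x := toWeakSpace ℝ H l)).tendsto.comp h
  exact this

lemma weakConverge_bounded [CompleteSpace H] {x : ℕ → H} {l : H} (h : WeakConverge x l) :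
    ∃ C : ℝ, ∀ n, ‖x n‖ ≤ C := by
  have hb : ∀ y : H, ∃ C : ℝ, ∀ n, ‖innerSL ℝ (x n) y‖ ≤ C := by
    intro y
    have ht : Tendsto (fun n => (inner ℝ y (x n) : ℝ)) atTop (nhds (inner ℝ y l : ℝ)) :=
      weakConverge_inner h y
    have hbdd := Bornology.IsBounded.subset_closedBall
      (Metric.isBounded_range_of_tendsto _ ht) 0
    obtain ⟨C, hC⟩ := hbdd
    refine ⟨C, fun n => ?_⟩
    have := hC ⟨n, rfl⟩
    simp only [Metric.mem_closedBall, Real.dist_eq, sub_zero] at this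
    simpa [innerSL_apply_apply, real_inner_comm] using this
  obtain ⟨C, hC⟩ := banach_steinhaus hb
  refine ⟨C, fun n => ?_⟩
  have := hC n
  rwa [innerSL_apply_norm] at this

theorem browder_demiclosed_principle [CompleteSpace H] {D : Set H} {T : H → H}
    (hT_nonexp : NonexpansiveOn T D) : DemiclosedOn (id - T) D := by
  intro u _ _ x hxD l hlD hweak hS
  -- S z := z - T z
  set v : H := l - T l with hv
  -- nonexpansiveness inequality
  have key : ∀ n, 0 ≤ 2 * (inner ℝ (x n - l) ((x n - T (x n)) - v) : ℝ)
      - ‖(x n - T (x n)) - v‖ ^ 2 := by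
    intro n
    have hle : ‖T (x n) - T l‖ ≤ ‖x n - l‖ := by
      have := hT_nonexp.dist_le_mul (x n) (hxD n) l hlD
      simpa [dist_eq_norm] using this
    have hsq : ‖T (x n) - T l‖ ^ 2 ≤ ‖x n - l‖ ^ 2 := by
      apply pow_le_pow_left₀ (norm_nonneg _) hle
    have hid : T (x n) - T l = (x n - l) - ((x n - T (x n)) - v) := by
      rw [hv]; abel
    rw [hid, norm_sub_sq_real] at hsq
    nlinarith [hsq]
  -- limits
  have hSn : Tendsto (fun n => x n - T (x n)) atTop (nhds u) := by
    simpa [Pi.sub_apply] using hS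
  obtain ⟨C, hC⟩ := weakConverge_bounded hweak
  -- first inner product term tends to 0
  have h1 : Tendsto (fun n => (inner ℝ (x n - l) ((x n - T (x n)) - u) : ℝ)) atTop (nhds 0) := by
    have hnorm : Tendsto (fun n => (‖x n‖ + ‖l‖) * ‖(x n - T (x n)) - u‖) atTop (nhds 0) := by
      have h2 : Tendsto (fun n => ‖(x n - T (x n)) - u‖) atTop (nhds 0) := by
        have := (hSn.sub_const u).norm
        simpa using this
      have hub : ∀ n, ‖(‖x n‖ + ‖l‖) * ‖(x n - T (x n)) - u‖‖ ≤
          (C + ‖l‖) * ‖(x n - T (x n)) - u‖ := by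
        intro n
        rw [Real.norm_eq_abs, abs_mul, abs_of_nonneg (by positivity), abs_of_nonneg (norm_nonneg _)]
        exact mul_le_mul_of_nonneg_right (by linarith [hC n]) (norm_nonneg _)
      have hlim : Tendsto (fun n => (C + ‖l‖) * ‖(x n - T (x n)) - u‖) atTop (nhds 0) := by
        simpa using h2.const_mul (C + ‖l‖)
      exact squeeze_zero_norm hub hlim
    apply squeeze_zero_norm _ hnorm
    intro n
    calc ‖(inner ℝ (x n - l) ((x n - T (x n)) - u) : ℝ)‖
        ≤ ‖x n - l‖ * ‖(x n - T (x n)) - u‖ := norm_inner_le_norm _ _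
      _ ≤ (‖x n‖ + ‖l‖) * ‖(x n - T (x n)) - u‖ :=
          mul_le_mul_of_nonneg_right (norm_sub_le _ _) (norm_nonneg _)
  -- second inner product term tends to 0
  have h2 : Tendsto (fun n => (inner ℝ (x n - l) (u - v) : ℝ)) atTop (nhds 0) := by
    have := (weakConverge_inner hweak (u - v)).sub_const (inner ℝ (u - v) l : ℝ)
    simp only [sub_self] at this
    have heq : (fun n => (inner ℝ (x n - l) (u - v) : ℝ))
        = fun n => (inner ℝ (u - v) (x n) : ℝ) - (inner ℝ (u - v) l : ℝ) := by
      funext n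
      rw [inner_sub_left, real_inner_comm (x n), real_inner_comm l]
    rw [heq]
    exact this
  -- combine
  have hfull : Tendsto (fun n => (inner ℝ (x n - l) ((x n - T (x n)) - v) : ℝ)) atTop (nhds 0) := by
    have heq : (fun n => (inner ℝ (x n - l) ((x n - T (x n)) - v) : ℝ))
        = fun n => (inner ℝ (x n - l) ((x n - T (x n)) - u) : ℝ)
            + (inner ℝ (x n - l) (u - v) : ℝ) := by
      funext n
      rw [← inner_add_right]
      congr 1
      abel
    rw [heq]
    simpa using h1.add h2
  have hnormsq : Tendsto (fun n => ‖(x n - T (x n)) - v‖ ^ 2) atTop (nhds (‖u - v‖ ^ 2)) := by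
    have := ((hSn.sub_const v).norm).pow 2
    exact this
  have hAll : Tendsto (fun n => 2 * (inner ℝ (x n - l) ((x n - T (x n)) - v) : ℝ)
      - ‖(x n - T (x n)) - v‖ ^ 2) atTop (nhds (2 * 0 - ‖u - v‖ ^ 2)) :=
    ((hfull.const_mul 2).sub hnormsq)
  have hle0 : 0 ≤ 2 * (0:ℝ) - ‖u - v‖ ^ 2 :=
    ge_of_tendsto' hAll key
  have : ‖u - v‖ ^ 2 ≤ 0 := by linarith
  have huv : u = v := by
    have h0 : ‖u - v‖ = 0 := by nlinarith [norm_nonneg (u - v), sq_nonneg ‖u - v‖]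
    exact sub_eq_zero.mp (norm_eq_zero.mp h0)
  show l - T l = u
  rw [huv, hv]
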